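/- Let U have size N, let 1 ≤ n ≤ N, let 0 ≤ m_t < M_t ≤ N, and let X = {x ∈ {0,1}^U : m_t ≤ Σ_i x_i ≤ M_t}. If min{m_t, N − M_t} < n, then for every real ε the Horvitz–Thompson mechanism under simple random sampling of size n fails (ε, 0)-differential privacy on X: there exist neighbors x, x' ∈ X and a real z such that P(t̂(x,S) = z) > 0 while P(t̂(x',S) = z) = 0. -/

import Mathlib

attribute [local instance] Classical.propDecidable

noncomputable section

/-- First-order inclusion probability `p_i = ∑_{s ∋ i} p(s)`. -/
def incl {U : Type*} [Fintype U] (p : Finset U → ℝ) (i : U) : ℝ :=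
  ∑ s ∈ Finset.univ.filter (fun s : Finset U => i ∈ s), p s

/-- Horvitz–Thompson estimator `t̂(x,s) = ∑_{i ∈ s} x_i / p_i`. -/
def tHat {U : Type*} [Fintype U] (p : Finset U → ℝ) (x : U → ℝ) (s : Finset U) : ℝ :=
  ∑ i ∈ s, x i / incl p i

/-- Probability of the event `E` under the sampling design `p`. -/
def Pr {U : Type*} [Fintype U] (p : Finset U → ℝ) (E : Finset U → Prop) : ℝ :=
  ∑ s ∈ Finset.univ.filter E, p s

/-- Two data vectors are neighbors if they differ in at most one coordinate. -/
def Neighbor {U : Type*} (x x' : U → ℝ) : Prop :=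
  {j | x j ≠ x' j}.Subsingleton

namespace SRSaux

variable {U : Type*} [Fintype U]

lemma card_filter_mem (i : U) (n : ℕ) (hn1 : 1 ≤ n) :
    (Finset.univ.filter fun s : Finset U => i ∈ s ∧ s.card = n).card
      = (Fintype.card U - 1).choose (n - 1) := by
  have hcard : (Finset.powersetCard (n - 1) (Finset.univ.erase i)).card
      = (Fintype.card U - 1).choose (n - 1) := by
    rw [Finset.card_powersetCard, Finset.card_erase_of_mem (Finset.mem_univ i),
      Finset.card_univ]
  rw [← hcard]
  refine Finset.card_bij' (fun s _ => s.erase i) (fun t _ => insert i t) ?_ ?_ ?_ ?_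
  · intro s hs
    rw [Finset.mem_filter] at hs
    rw [Finset.mem_powersetCard]
    exact ⟨Finset.erase_subset_erase i (Finset.subset_univ s),
      by rw [Finset.card_erase_of_mem hs.2.1, hs.2.2]⟩
  · intro t ht
    rw [Finset.mem_powersetCard] at ht
    have hit : i ∉ t := fun h => (Finset.mem_erase.mp (ht.1 h)).1 rfl
    rw [Finset.mem_filter]
    refine ⟨Finset.mem_univ _, Finset.mem_insert_self _ _, ?_⟩
    rw [Finset.card_insert_of_notMem hit, ht.2]
    omega
  · intro s hs
    rw [Finset.mem_filter] at hs
    exact Finset.insert_erase hs.2.1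
  · intro t ht
    rw [Finset.mem_powersetCard] at ht
    have hit : i ∉ t := fun h => (Finset.mem_erase.mp (ht.1 h)).1 rfl
    exact Finset.erase_insert hit

lemma incl_eq (N n : ℕ) (hN : Fintype.card U = N) (hn1 : 1 ≤ n)
    (p : Finset U → ℝ)
    (hdef : ∀ s : Finset U, p s = if s.card = n then (1 : ℝ) / (N.choose n) else 0)
    (i : U) :
    incl p i = ((N - 1).choose (n - 1) : ℝ) / (N.choose n) := by
  unfold incl
  rw [Finset.sum_congr rfl (fun s _ => hdef s), ← Finset.sum_filter,
    Finset.filter_filter, Finset.sum_const, card_filter_mem i n hn1, hN,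
    nsmul_eq_mul]
  ring

lemma sum_ind (A s : Finset U) :
    (∑ i ∈ s, (if i ∈ A then (1 : ℝ) else 0)) = ((s ∩ A).card : ℝ) := by
  rw [Finset.sum_ite_mem, Finset.sum_const, nsmul_eq_mul, mul_one]

lemma tHat_ind (N n : ℕ) (hN : Fintype.card U = N) (hn1 : 1 ≤ n)
    (p : Finset U → ℝ)
    (hdef : ∀ s : Finset U, p s = if s.card = n then (1 : ℝ) / (N.choose n) else 0)
    (A s : Finset U) :
    tHat p (fun i => if i ∈ A then (1 : ℝ) else 0) s
      = ((s ∩ A).card : ℝ) / (((N - 1).choose (n - 1) : ℝ) / (N.choose n)) := by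
  unfold tHat
  rw [Finset.sum_congr rfl (fun i _ => by rw [incl_eq N n hN hn1 p hdef i]),
    ← Finset.sum_div, sum_ind]

end SRSaux

open SRSaux in
theorem SRS_binary_pure_DP_fails {U : Type*} [Fintype U]
    (N n mt Mt : ℕ) (hN : Fintype.card U = N) (hn1 : 1 ≤ n) (hnN : n ≤ N)
    (hmM : mt < Mt) (hMN : Mt ≤ N)
    (p : Finset U → ℝ)
    (hdef : ∀ s : Finset U, p s = if s.card = n then (1 : ℝ) / (N.choose n) else 0)
    (X : Set (U → ℝ))
    (hX : X = {x | (∀ i, x i = 0 ∨ x i = 1) ∧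
      (mt : ℝ) ≤ ∑ i, x i ∧ ∑ i, x i ≤ (Mt : ℝ)})
    (hmin : min mt (N - Mt) < n) :
    ∀ ε : ℝ, ∃ x ∈ X, ∃ x' ∈ X, Neighbor x x' ∧ ∃ z : ℝ,
      0 < Pr p (fun s => tHat p x s = z) ∧ Pr p (fun s => tHat p x' s = z) = 0 := by
  intro ε
  have hcardU : (Finset.univ : Finset U).card = N := by rw [Finset.card_univ, hN]
  set c : ℝ := ((N - 1).choose (n - 1) : ℝ) / (N.choose n) with hc_def
  have hCpos : 0 < (N.choose n : ℝ) := by exact_mod_cast Nat.choose_pos hnN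
  have hC'pos : 0 < ((N - 1).choose (n - 1) : ℝ) := by
    exact_mod_cast Nat.choose_pos (by omega : n - 1 ≤ N - 1)
  have hc : 0 < c := div_pos hC'pos hCpos
  have hpnn : ∀ s : Finset U, 0 ≤ p s := by
    intro s; rw [hdef]; split <;> positivity
  -- indicator vector membership in X
  have hsum : ∀ B : Finset U, (∑ i, (if i ∈ B then (1 : ℝ) else 0)) = (B.card : ℝ) := by
    intro B; rw [sum_ind, Finset.univ_inter]
  have hmemX : ∀ B : Finset U, mt ≤ B.card → B.card ≤ Mt →
      (fun i => if i ∈ B then (1 : ℝ) else 0) ∈ X := by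
    intro B h1 h2
    rw [hX]
    refine ⟨fun i => by by_cases h : i ∈ B <;> simp [h], ?_, ?_⟩
    · rw [hsum]; exact_mod_cast h1
    · rw [hsum]; exact_mod_cast h2
  -- neighbor lemma: indicator of A.erase a vs indicator of A
  have hnb : ∀ (A : Finset U) (a : U),
      Neighbor (fun i => if i ∈ A.erase a then (1 : ℝ) else 0)
        (fun i => if i ∈ A then (1 : ℝ) else 0) := by
    intro A a
    have key : ∀ j, j ∈ {j | (if j ∈ A.erase a then (1 : ℝ) else 0)
        ≠ (if j ∈ A then (1 : ℝ) else 0)} → j = a := by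
      intro j hj
      by_contra h
      apply hj
      have : j ∈ A.erase a ↔ j ∈ A := by
        rw [Finset.mem_erase]; exact ⟨fun h' => h'.2, fun h' => ⟨h, h'⟩⟩
      exact if_congr this rfl rfl
    intro y hy z hz
    rw [key y hy, key z hz]
  have hnbs : ∀ x x' : U → ℝ, Neighbor x x' → Neighbor x' x :=
    fun x x' h y hy z hz => h (Ne.symm hy) (Ne.symm hz)
  -- positivity of Pr given a witness sample of size n
  have hPrPos : ∀ (x : U → ℝ) (z : ℝ) (s0 : Finset U), s0.card = n → tHat p x s0 = z →
      0 < Pr p (fun s => tHat p x s = z) := by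
    intro x z s0 hs0 hz
    unfold Pr
    refine Finset.sum_pos' (fun s _ => hpnn s) ⟨s0, ?_, ?_⟩
    · rw [Finset.mem_filter]; exact ⟨Finset.mem_univ _, hz⟩
    · rw [hdef, if_pos hs0]; positivity
  rcases min_lt_iff.mp hmin with h1 | h2
  · -- case mt < n : use totals mt+1 (for x) and mt (for x')
    obtain ⟨A, _, hA⟩ := Finset.exists_subset_card_eq (s := (Finset.univ : Finset U)) (n := mt + 1)
      (by omega)
    obtain ⟨a, ha⟩ := Finset.card_pos.mp (by omega : 0 < A.card)
    refine ⟨_, hmemX A (by omega) (by omega), _,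
      hmemX (A.erase a) (by rw [Finset.card_erase_of_mem ha, hA]; omega)
        (by rw [Finset.card_erase_of_mem ha, hA]; omega),
      hnbs _ _ (hnb A a), ((mt + 1 : ℕ) : ℝ) / c, ?_, ?_⟩
    · -- positive probability: a sample containing all of A
      obtain ⟨s0, hAs0, hs0⟩ := Finset.exists_superset_card_eq
        (s := A) (n := n) (by omega) (by omega)
      refine hPrPos _ _ s0 hs0 ?_
      rw [tHat_ind N n hN hn1 p hdef, Finset.inter_eq_right.mpr hAs0, hA]
    · -- zero probability for the smaller total
      unfold Pr
      refine Finset.sum_eq_zero (fun s hs => ?_)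
      rw [Finset.mem_filter] at hs
      rw [hdef]
      split_ifs with hcard
      · exfalso
        have ht := hs.2
        rw [tHat_ind N n hN hn1 p hdef] at ht
        have hle : (s ∩ A.erase a).card ≤ mt := by
          have := Finset.card_le_card (Finset.inter_subset_right (s₁ := s) (s₂ := A.erase a))
          rw [Finset.card_erase_of_mem ha, hA] at this
          omega
        have hlt : ((s ∩ A.erase a).card : ℝ) / c < ((mt + 1 : ℕ) : ℝ) / c := by
          apply div_lt_div_of_pos_right _ hc
          exact_mod_cast Nat.lt_succ_of_le hle
        rw [ht] at hlt
        exact lt_irrefl _ hlt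
      · rfl
  · -- case N - Mt < n : use totals Mt-1 (for x) and Mt (for x')
    obtain ⟨A', _, hA'⟩ := Finset.exists_subset_card_eq (s := (Finset.univ : Finset U)) (n := Mt)
      (by omega)
    obtain ⟨a, ha⟩ := Finset.card_pos.mp (by omega : 0 < A'.card)
    set A := A'.erase a with hAdef
    have hAcard : A.card = Mt - 1 := by rw [hAdef, Finset.card_erase_of_mem ha, hA']
    -- build witness sample s0 = B ∪ Aᶜ with |B| = n - (N - Mt) - 1
    obtain ⟨B, hBA, hB⟩ := Finset.exists_subset_card_eq (s := A) (n := n - (N - Mt) - 1) (by omega)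
    have hAc : Aᶜ.card = N - Mt + 1 := by
      rw [Finset.card_compl, hN, hAcard]; omega
    have hdisj : Disjoint B Aᶜ :=
      Finset.disjoint_left.mpr (fun i hiB hiC => (Finset.mem_compl.mp hiC) (hBA hiB))
    set s0 := B ∪ Aᶜ with hs0def
    have hs0card : s0.card = n := by
      rw [hs0def, Finset.card_union_of_disjoint hdisj, hB, hAc]; omega
    have hs0A : s0 ∩ A = B := by
      ext i
      simp only [hs0def, Finset.mem_inter, Finset.mem_union, Finset.mem_compl]
      constructor
      · rintro ⟨hi1 | hi2, hiA⟩
        · exact hi1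
        · exact absurd hiA hi2
      · intro hiB
        exact ⟨Or.inl hiB, hBA hiB⟩
    refine ⟨_, hmemX A (by omega) (by omega), _, hmemX A' (by omega) (by omega),
      hnb A' a, ((n - (N - Mt) - 1 : ℕ) : ℝ) / c, ?_, ?_⟩
    · refine hPrPos _ _ s0 hs0card ?_
      rw [tHat_ind N n hN hn1 p hdef, hs0A, hB]
    · unfold Pr
      refine Finset.sum_eq_zero (fun s hs => ?_)
      rw [Finset.mem_filter] at hs
      rw [hdef]
      split_ifs with hcard
      · exfalso
        have ht := hs.2
        rw [tHat_ind N n hN hn1 p hdef] at ht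
        have h1 : (s ∩ A').card + (s \ A').card = s.card :=
          Finset.card_inter_add_card_sdiff s A'
        have h2 : (s \ A').card ≤ N - Mt := by
          have hsub : s \ A' ⊆ A'ᶜ := by
            intro i hi
            rw [Finset.mem_compl]
            exact (Finset.mem_sdiff.mp hi).2
          have := Finset.card_le_card hsub
          rw [Finset.card_compl, hN, hA'] at this
          exact this
        have hgt : (n - (N - Mt) - 1 : ℕ) < (s ∩ A').card := by omega
        have hlt : ((n - (N - Mt) - 1 : ℕ) : ℝ) / c < ((s ∩ A').card : ℝ) / c := by
          apply div_lt_div_of_pos_right _ hc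
          exact_mod_cast hgt
        rw [ht] at hlt
        exact lt_irrefl _ hlt
      · rfl
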